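/- Let n ≥ 3 be an integer. Then S(a) = cosh(a) · ∫_1^∞ (t^{2n−2} − 1)^{−1/2} · (cosh²(a)·t² − 1)^{−1/2} dt tends to +∞ as a → 0⁺ (equivalently, the height 2·S of the translation-invariant minimal hypersurface M_d tends to infinity as d = cosh^{n−1}(a) → 1⁺). -/

import Mathlib

open Real MeasureTheory Set Filter intervalIntegral

/-- `S n a = cosh(a) · ∫_1^∞ (t^{2n−2} − 1)^{-1/2} (cosh²(a)·t² − 1)^{-1/2} dt`. -/
noncomputable def S (n : ℕ) (a : ℝ) : ℝ :=
  Real.cosh a *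
    ∫ t in Set.Ioi (1 : ℝ),
      (t ^ (2 * n - 2) - 1) ^ (-(1 : ℝ) / 2) *
        (Real.cosh a ^ 2 * t ^ 2 - 1) ^ (-(1 : ℝ) / 2)

namespace SAux

/-- the integrand -/
noncomputable def F (m : ℕ) (c t : ℝ) : ℝ :=
  (t ^ m - 1) ^ (-(1 : ℝ) / 2) * (c ^ 2 * t ^ 2 - 1) ^ (-(1 : ℝ) / 2)

/-- the constant in the lower bound -/
noncomputable def K (m : ℕ) : ℝ := (7 * ((m : ℝ) * 2 ^ m)) ^ (-(1 : ℝ) / 2)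

lemma K_pos {m : ℕ} (hm : 4 ≤ m) : 0 < K m := by
  apply Real.rpow_pos_of_pos
  have h0 : (0:ℝ) < (m:ℝ) := by exact_mod_cast (by omega : 0 < m)
  positivity

lemma rpow_neg_half_sq {y : ℝ} (hy : 0 < y) : (y ^ 2 : ℝ) ^ (-(1 : ℝ) / 2) = y⁻¹ := by
  have h2 : (y ^ 2 : ℝ) = y ^ (2 : ℝ) := by
    rw [← Real.rpow_natCast y 2]; norm_num
  rw [h2, ← Real.rpow_mul hy.le,
    show (2 : ℝ) * (-(1:ℝ)/2) = -1 by norm_num, Real.rpow_neg_one]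

lemma base1_pos {m : ℕ} (hm : 1 ≤ m) {t : ℝ} (ht : 1 < t) : 0 < t ^ m - 1 := by
  have := one_lt_pow₀ ht (by omega : m ≠ 0)
  linarith

lemma base2_pos {c t : ℝ} (hc : 1 ≤ c) (ht : 1 < t) : 0 < c ^ 2 * t ^ 2 - 1 := by
  have h1 : (1:ℝ) ≤ c ^ 2 := by nlinarith
  have h2 : (1:ℝ) < t ^ 2 := by nlinarith
  have h3 : 1 * t ^ 2 ≤ c ^ 2 * t ^ 2 := mul_le_mul_of_nonneg_right h1 (by positivity)
  linarith

/-- Pointwise lower bound on `(1+s, 2]` where `s = c² − 1`. -/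
lemma F_lower {m : ℕ} (hm : 4 ≤ m) {c : ℝ} (hc : 1 ≤ c) {t : ℝ}
    (ht : t ∈ Set.Ioc (1 + (c ^ 2 - 1)) 2) :
    K m * (t - 1)⁻¹ ≤ F m c t := by
  obtain ⟨ht1, ht2⟩ := ht
  set s : ℝ := c ^ 2 - 1 with hs
  have hs0 : 0 ≤ s := by nlinarith
  have htgt : 1 < t := by linarith
  have htm1 : 0 < t - 1 := by linarith
  have hst : s < t - 1 := by linarith
  set C : ℝ := (m : ℝ) * 2 ^ m with hC
  have hCpos : (0:ℝ) < C := by positivity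
  -- bound 1 : t^m − 1 ≤ C (t−1)
  have h1 : t ^ m - 1 ≤ C * (t - 1) := by
    have hg : (∑ i ∈ Finset.range m, t ^ i) * (t - 1) = t ^ m - 1 := geom_sum_mul t m
    have hsum : (∑ i ∈ Finset.range m, t ^ i) ≤ (m : ℝ) * 2 ^ m := by
      calc (∑ i ∈ Finset.range m, t ^ i) ≤ ∑ i ∈ Finset.range m, (2:ℝ) ^ m := by
            apply Finset.sum_le_sum
            intro i hi
            calc t ^ i ≤ (2:ℝ) ^ i := pow_le_pow_left₀ (by linarith) ht2 i
              _ ≤ (2:ℝ) ^ m := pow_le_pow_right₀ one_le_two (Finset.mem_range.mp hi).le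
        _ = (m : ℝ) * 2 ^ m := by simp [mul_comm]
    calc t ^ m - 1 = (∑ i ∈ Finset.range m, t ^ i) * (t - 1) := hg.symm
      _ ≤ ((m : ℝ) * 2 ^ m) * (t - 1) := by
          apply mul_le_mul_of_nonneg_right hsum htm1.le
  -- bound 2 : c²t² − 1 ≤ 7 (t−1)
  have h2 : c ^ 2 * t ^ 2 - 1 ≤ 7 * (t - 1) := by
    have hc2 : c ^ 2 * t ^ 2 = t ^ 2 + s * t ^ 2 := by rw [hs]; ring
    have ht4 : t ^ 2 ≤ 4 := by nlinarith
    have hA : t ^ 2 - 1 ≤ 3 * (t - 1) := by nlinarith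
    have hB1 : s * t ^ 2 ≤ s * 4 := mul_le_mul_of_nonneg_left ht4 hs0
    have hB : s * t ^ 2 ≤ 4 * (t - 1) := by linarith
    linarith
  have hb1 : 0 < t ^ m - 1 := base1_pos (by omega) htgt
  have hb2 : 0 < c ^ 2 * t ^ 2 - 1 := base2_pos hc htgt
  have hz : (-(1:ℝ)/2) ≤ 0 := by norm_num
  have e1 : (C * (t - 1)) ^ (-(1:ℝ)/2) ≤ (t ^ m - 1) ^ (-(1:ℝ)/2) :=
    Real.rpow_le_rpow_of_nonpos hb1 h1 hz
  have e2 : (7 * (t - 1)) ^ (-(1:ℝ)/2) ≤ (c ^ 2 * t ^ 2 - 1) ^ (-(1:ℝ)/2) :=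
    Real.rpow_le_rpow_of_nonpos hb2 h2 hz
  have key : (C * (t - 1)) ^ (-(1:ℝ)/2) * (7 * (t - 1)) ^ (-(1:ℝ)/2)
      = K m * (t - 1)⁻¹ := by
    rw [← Real.mul_rpow (by positivity) (by positivity)]
    have : C * (t - 1) * (7 * (t - 1)) = (7 * C) * (t - 1) ^ 2 := by ring
    rw [this, Real.mul_rpow (by positivity) (by positivity), rpow_neg_half_sq htm1]
    rfl
  calc K m * (t - 1)⁻¹ = (C * (t - 1)) ^ (-(1:ℝ)/2) * (7 * (t - 1)) ^ (-(1:ℝ)/2) := key.symm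
    _ ≤ (t ^ m - 1) ^ (-(1:ℝ)/2) * (c ^ 2 * t ^ 2 - 1) ^ (-(1:ℝ)/2) := by
        apply mul_le_mul e1 e2 (Real.rpow_nonneg (by positivity) _)
          (Real.rpow_nonneg hb1.le _)

lemma F_continuousOn {m : ℕ} (hm : 4 ≤ m) {c : ℝ} (hc : 1 ≤ c) :
    ContinuousOn (F m c) (Set.Ioi 1) := by
  apply ContinuousOn.mul
  · apply ContinuousOn.rpow_const
    · fun_prop
    · intro t ht
      exact Or.inl (ne_of_gt (base1_pos (by omega) ht))
  · apply ContinuousOn.rpow_const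
    · fun_prop
    · intro t ht
      exact Or.inl (ne_of_gt (base2_pos hc ht))

/-- Integrability of the integrand on `(1, ∞)` for `c > 1`. -/
lemma F_integrableOn {m : ℕ} (hm : 4 ≤ m) {c : ℝ} (hc : 1 < c) :
    IntegrableOn (F m c) (Set.Ioi 1) := by
  have hcont := F_continuousOn hm hc.le
  have hsplit : Set.Ioc (1:ℝ) 2 ∪ Set.Ioi 2 = Set.Ioi 1 :=
    Set.Ioc_union_Ioi_eq_Ioi (by norm_num)
  rw [← hsplit]
  apply MeasureTheory.IntegrableOn.union
  · -- on (1,2]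
    set s : ℝ := c ^ 2 - 1 with hs
    have hs0 : 0 < s := by nlinarith
    have hmeas : AEStronglyMeasurable (F m c) (volume.restrict (Set.Ioc (1:ℝ) 2)) :=
      (hcont.mono (Set.Ioc_subset_Ioi_self)).aestronglyMeasurable measurableSet_Ioc
    apply MeasureTheory.Integrable.mono'
      (g := fun t => s ^ (-(1:ℝ)/2) * (t - 1) ^ (-(1:ℝ)/2)) ?_ hmeas
    · rw [MeasureTheory.ae_restrict_iff' measurableSet_Ioc]
      filter_upwards with t ht
      obtain ⟨ht1, ht2⟩ := ht
      have hb1 : 0 < t ^ m - 1 := base1_pos (by omega) ht1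
      have hb2 : 0 < c ^ 2 * t ^ 2 - 1 := base2_pos hc.le ht1
      simp only [F]
      rw [Real.norm_of_nonneg (mul_nonneg (Real.rpow_nonneg hb1.le _)
        (Real.rpow_nonneg hb2.le _))]
      have e2 : (c ^ 2 * t ^ 2 - 1) ^ (-(1:ℝ)/2) ≤ s ^ (-(1:ℝ)/2) := by
        have h : c ^ 2 * 1 ≤ c ^ 2 * t ^ 2 :=
          mul_le_mul_of_nonneg_left (by nlinarith) (by positivity)
        apply Real.rpow_le_rpow_of_nonpos hs0 (by nlinarith [h]) (by norm_num)
      have e1 : (t ^ m - 1) ^ (-(1:ℝ)/2) ≤ (t - 1) ^ (-(1:ℝ)/2) := by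
        apply Real.rpow_le_rpow_of_nonpos (by linarith) ?_ (by norm_num)
        have : t ≤ t ^ m := le_self_pow₀ (by linarith) (by omega)
        linarith
      calc (t ^ m - 1) ^ (-(1:ℝ)/2) * (c ^ 2 * t ^ 2 - 1) ^ (-(1:ℝ)/2)
          ≤ (t - 1) ^ (-(1:ℝ)/2) * (s ^ (-(1:ℝ)/2)) :=
            mul_le_mul e1 e2 (Real.rpow_nonneg hb2.le _) (Real.rpow_nonneg (by linarith) _)
        _ = s ^ (-(1:ℝ)/2) * (t - 1) ^ (-(1:ℝ)/2) := by ring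
    · -- integrability of the bound
      have h0 : IntervalIntegrable (fun x : ℝ => x ^ (-(1:ℝ)/2)) volume 0 1 :=
        intervalIntegral.intervalIntegrable_rpow' (by norm_num)
      have h1 : IntervalIntegrable (fun x : ℝ => (x - 1) ^ (-(1:ℝ)/2)) volume 1 2 := by
        have := h0.comp_sub_right 1
        rw [show (1:ℝ) + 1 = 2 by norm_num, show (0:ℝ) + 1 = 1 by norm_num] at this
        exact this
      have h2 := (h1.const_mul (s ^ (-(1:ℝ)/2)))
      rw [intervalIntegrable_iff_integrableOn_Ioc_of_le (by norm_num)] at h2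
      exact h2
  · -- on (2, ∞)
    have hmeas : AEStronglyMeasurable (F m c) (volume.restrict (Set.Ioi (2:ℝ))) :=
      (hcont.mono (Set.Ioi_subset_Ioi one_le_two)).aestronglyMeasurable measurableSet_Ioi
    apply MeasureTheory.Integrable.mono'
      (g := fun t => 2 * t ^ (-2 : ℝ)) ?_ hmeas
    · rw [MeasureTheory.ae_restrict_iff' measurableSet_Ioi]
      filter_upwards with t ht
      have ht2 : (2:ℝ) < t := ht
      have ht1 : (1:ℝ) < t := by linarith
      have hb1 : 0 < t ^ m - 1 := base1_pos (by omega) ht1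
      have hb2 : 0 < c ^ 2 * t ^ 2 - 1 := base2_pos hc.le ht1
      simp only [F]
      rw [Real.norm_of_nonneg (mul_nonneg (Real.rpow_nonneg hb1.le _)
        (Real.rpow_nonneg hb2.le _))]
      have htsq : (0:ℝ) < t ^ 2 / 2 := by nlinarith
      have key1 : t ^ 2 / 2 ≤ t ^ m - 1 := by
        have : t ^ 2 ≤ t ^ m := pow_le_pow_right₀ (by linarith) (by omega)
        nlinarith
      have key2 : t ^ 2 / 2 ≤ c ^ 2 * t ^ 2 - 1 := by
        have h : 1 * t ^ 2 ≤ c ^ 2 * t ^ 2 :=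
          mul_le_mul_of_nonneg_right (by nlinarith) (by positivity)
        nlinarith [h, sq_nonneg (t - 2)]
      have e1 : (t ^ m - 1) ^ (-(1:ℝ)/2) ≤ (t ^ 2 / 2) ^ (-(1:ℝ)/2) :=
        Real.rpow_le_rpow_of_nonpos htsq key1 (by norm_num)
      have e2 : (c ^ 2 * t ^ 2 - 1) ^ (-(1:ℝ)/2) ≤ (t ^ 2 / 2) ^ (-(1:ℝ)/2) :=
        Real.rpow_le_rpow_of_nonpos htsq key2 (by norm_num)
      have hg : (t ^ 2 / 2) ^ (-(1:ℝ)/2) * (t ^ 2 / 2) ^ (-(1:ℝ)/2) = 2 * t ^ (-2 : ℝ) := by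
        rw [← Real.rpow_add htsq]
        have : (-(1:ℝ)/2) + (-(1:ℝ)/2) = -1 := by norm_num
        rw [this, Real.rpow_neg_one]
        have ht0 : (0:ℝ) < t := by linarith
        rw [show (-2 : ℝ) = -((2:ℕ):ℝ) by norm_num, Real.rpow_neg ht0.le,
          Real.rpow_natCast]
        field_simp
      calc (t ^ m - 1) ^ (-(1:ℝ)/2) * (c ^ 2 * t ^ 2 - 1) ^ (-(1:ℝ)/2)
          ≤ (t ^ 2 / 2) ^ (-(1:ℝ)/2) * (t ^ 2 / 2) ^ (-(1:ℝ)/2) :=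
            mul_le_mul e1 e2 (Real.rpow_nonneg hb2.le _) (Real.rpow_nonneg htsq.le _)
        _ = 2 * t ^ (-2:ℝ) := hg
    · exact (integrableOn_Ioi_rpow_of_lt (by norm_num) (by norm_num : (0:ℝ) < 2)).const_mul 2

/-- the log integral -/
lemma log_integral {s : ℝ} (hs0 : 0 < s) (hs1 : s ≤ 1) :
    ∫ t in Set.Ioc (1 + s) 2, (t - 1)⁻¹ = - Real.log s := by
  rw [← intervalIntegral.integral_of_le (by linarith)]
  have := intervalIntegral.integral_comp_sub_right (a := 1 + s) (b := 2)
    (fun x : ℝ => x⁻¹) 1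
  rw [this]
  rw [show (1 + s - 1 : ℝ) = s by ring, show (2 - 1 : ℝ) = 1 by norm_num,
    integral_inv_of_pos hs0 one_pos, one_div, Real.log_inv]

end SAux

open SAux in
/-- For `n ≥ 3`, `S(a)` tends to `+∞` as `a → 0⁺` (i.e. the height of the
translation-invariant minimal hypersurface `M_d` tends to infinity as
`d = cosh^{n−1}(a) → 1⁺`). -/
theorem S_tendsto_atTop (n : ℕ) (hn : 3 ≤ n) :
    Filter.Tendsto (S n) (nhdsWithin 0 (Set.Ioi 0)) Filter.atTop := by
  set m : ℕ := 2 * n - 2 with hmdef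
  have hm : 4 ≤ m := by omega
  have hK := K_pos hm
  -- the comparison function
  set g : ℝ → ℝ := fun a => K m * (- Real.log (Real.cosh a ^ 2 - 1)) with hg
  -- s(a) → 0 within Ioi 0
  have hsc : Filter.Tendsto (fun a : ℝ => Real.cosh a ^ 2 - 1)
      (nhdsWithin 0 (Set.Ioi 0)) (nhdsWithin 0 (Set.Ioi 0)) := by
    rw [tendsto_nhdsWithin_iff]
    constructor
    · have hcont : Continuous (fun a : ℝ => Real.cosh a ^ 2 - 1) := by fun_prop
      have := hcont.tendsto 0
      simp only [Real.cosh_zero, one_pow, sub_self] at this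
      exact this.mono_left nhdsWithin_le_nhds
    · filter_upwards [self_mem_nhdsWithin] with a ha
      have h1 : 1 < Real.cosh a := Real.one_lt_cosh.mpr (Set.mem_Ioi.mp ha).ne'
      have h2 : (1:ℝ) < Real.cosh a ^ 2 := by nlinarith
      simp only [Set.mem_Ioi]
      linarith
  have hgtend : Filter.Tendsto g (nhdsWithin 0 (Set.Ioi 0)) Filter.atTop := by
    apply Filter.Tendsto.const_mul_atTop hK
    have hlog : Filter.Tendsto (fun a : ℝ => Real.log (Real.cosh a ^ 2 - 1))
        (nhdsWithin 0 (Set.Ioi 0)) Filter.atBot :=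
      Real.tendsto_log_nhdsGT_zero.comp hsc
    exact Filter.tendsto_neg_atBot_atTop.comp hlog
  -- eventually s(a) < 1
  have hev : ∀ᶠ a in nhdsWithin 0 (Set.Ioi 0),
      Real.cosh a ^ 2 - 1 ≤ 1 ∧ 0 < a := by
    have h1 : ∀ᶠ a in nhdsWithin 0 (Set.Ioi 0), Real.cosh a ^ 2 - 1 ≤ 1 := by
      have h := (hsc.mono_right nhdsWithin_le_nhds).eventually (eventually_lt_nhds one_pos)
      filter_upwards [h] with a ha using (le_of_lt ha)
    filter_upwards [h1, self_mem_nhdsWithin] with a h1 h2 using ⟨h1, h2⟩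
  -- main inequality : g a ≤ S n a eventually
  apply Filter.tendsto_atTop_mono' _ _ hgtend
  filter_upwards [hev] with a ⟨hs1, ha⟩
  set c : ℝ := Real.cosh a with hc
  have hc1 : 1 < c := Real.one_lt_cosh.mpr ha.ne' 
  set s : ℝ := c ^ 2 - 1 with hs
  have hs0 : 0 < s := by nlinarith
  have hsub : Set.Ioc (1 + s) 2 ⊆ Set.Ioi (1:ℝ) := fun t ht => by
    have := ht.1; simp only [Set.mem_Ioi]; linarith
  have hFi : IntegrableOn (F m c) (Set.Ioi 1) := F_integrableOn hm hc1
  have hFi2 : IntegrableOn (F m c) (Set.Ioc (1 + s) 2) := hFi.mono_set hsub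
  have hGi : IntegrableOn (fun t : ℝ => K m * (t - 1)⁻¹) (Set.Ioc (1 + s) 2) := by
    have hcont : ContinuousOn (fun t : ℝ => K m * (t - 1)⁻¹) (Set.Icc (1 + s) 2) := by
      apply ContinuousOn.mul continuousOn_const
      apply ContinuousOn.inv₀ (by fun_prop)
      intro t ht
      have := ht.1
      have : (1:ℝ) < t := by linarith
      intro h; linarith [sub_eq_zero.mp h]
    exact (hcont.integrableOn_compact isCompact_Icc).mono_set Set.Ioc_subset_Icc_self
  have step1 : ∫ t in Set.Ioc (1 + s) 2, K m * (t - 1)⁻¹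
      ≤ ∫ t in Set.Ioc (1 + s) 2, F m c t := by
    apply MeasureTheory.setIntegral_mono_on hGi hFi2 measurableSet_Ioc
    intro t ht
    exact F_lower hm hc1.le ht
  have step2 : ∫ t in Set.Ioc (1 + s) 2, F m c t ≤ ∫ t in Set.Ioi 1, F m c t := by
    apply MeasureTheory.setIntegral_mono_set hFi ?_ (HasSubset.Subset.eventuallyLE hsub)
    filter_upwards [MeasureTheory.ae_restrict_mem measurableSet_Ioi] with t ht
    have hb1 : 0 < t ^ m - 1 := base1_pos (by omega) ht
    have hb2 : 0 < c ^ 2 * t ^ 2 - 1 := base2_pos hc1.le ht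
    exact mul_nonneg (Real.rpow_nonneg hb1.le _) (Real.rpow_nonneg hb2.le _)
  have hI0 : 0 ≤ ∫ t in Set.Ioi (1:ℝ), F m c t := by
    apply MeasureTheory.setIntegral_nonneg measurableSet_Ioi
    intro t ht
    have hb1 : 0 < t ^ m - 1 := base1_pos (by omega) ht
    have hb2 : 0 < c ^ 2 * t ^ 2 - 1 := base2_pos hc1.le ht
    exact mul_nonneg (Real.rpow_nonneg hb1.le _) (Real.rpow_nonneg hb2.le _)
  have hlhs : ∫ t in Set.Ioc (1 + s) 2, K m * (t - 1)⁻¹ = g a := by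
    rw [MeasureTheory.integral_const_mul, log_integral hs0 hs1]
  have hS : S n a = c * ∫ t in Set.Ioi (1:ℝ), F m c t := rfl
  calc g a = ∫ t in Set.Ioc (1 + s) 2, K m * (t - 1)⁻¹ := hlhs.symm
    _ ≤ ∫ t in Set.Ioi (1:ℝ), F m c t := step1.trans step2
    _ ≤ c * ∫ t in Set.Ioi (1:ℝ), F m c t :=
        le_mul_of_one_le_left hI0 hc1.le
    _ = S n a := hS.symm
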